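/- Let V be a vector space over a field K with a distinguished element 1 ∈ V, and m: V ⊗ V → V a linear map satisfying m(v ⊗ 1) = v for all v ∈ V. Define σ^m: V ⊗ V → V ⊗ V by σ^m(v ⊗ w) = 1 ⊗ m(v ⊗ w). Then m is associative if and only if σ^m satisfies the braid relation (σ^m ⊗ id)(id ⊗ σ^m)(σ^m ⊗ id) = (id ⊗ σ^m)(σ^m ⊗ id)(id ⊗ σ^m) on V ⊗ V ⊗ V. -/
import Mathlib


open TensorProduct LinearMap

/-- Lebed's criterion: for `m : V ⊗ V → V` with a right unit `1` (`m(v ⊗ 1) = v`), letting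
`σ^m (v ⊗ w) = 1 ⊗ m(v ⊗ w)`, the map `m` is associative if and only if `σ^m` satisfies the
braid relation `(σ^m⊗id)(id⊗σ^m)(σ^m⊗id) = (id⊗σ^m)(σ^m⊗id)(id⊗σ^m)` on `V ⊗ V ⊗ V`
(equivalently, `σ_1 ↦ σ^m ⊗ id`, `σ_2 ↦ id ⊗ σ^m` defines a representation of `B_3⁺`). -/
theorem assoc_iff_braid (K V : Type*) [Field K] [AddCommGroup V] [Module K V]
    (one : V) (m : V ⊗[K] V →ₗ[K] V) (hone : ∀ v : V, m (v ⊗ₜ one) = v) :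
    letI σm : V ⊗[K] V →ₗ[K] V ⊗[K] V := (TensorProduct.mk K V V one).comp m
    letI A1 : V ⊗[K] (V ⊗[K] V) →ₗ[K] V ⊗[K] (V ⊗[K] V) :=
      (TensorProduct.assoc K V V V).toLinearMap ∘ₗ (rTensor V σm) ∘ₗ
        (TensorProduct.assoc K V V V).symm.toLinearMap
    letI A2 : V ⊗[K] (V ⊗[K] V) →ₗ[K] V ⊗[K] (V ⊗[K] V) := lTensor V σm
    ((m ∘ₗ (rTensor V m) ∘ₗ (TensorProduct.assoc K V V V).symm.toLinearMap
        = m ∘ₗ lTensor V m) ↔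
      (A1 ∘ₗ A2 ∘ₗ A1 = A2 ∘ₗ A1 ∘ₗ A2)) := by
  set σm : V ⊗[K] V →ₗ[K] V ⊗[K] V := (TensorProduct.mk K V V) one ∘ₗ m with hσm
  set A1 : V ⊗[K] (V ⊗[K] V) →ₗ[K] V ⊗[K] (V ⊗[K] V) :=
    (TensorProduct.assoc K V V V).toLinearMap ∘ₗ (rTensor V σm) ∘ₗ
      (TensorProduct.assoc K V V V).symm.toLinearMap with hA1def
  set A2 : V ⊗[K] (V ⊗[K] V) →ₗ[K] V ⊗[K] (V ⊗[K] V) := lTensor V σm with hA2def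
  have hσ : ∀ x : V ⊗[K] V, σm x = one ⊗ₜ m x := fun x => rfl
  have hA1 : ∀ (u v w : V), A1 (u ⊗ₜ (v ⊗ₜ w)) = one ⊗ₜ (m (u ⊗ₜ v) ⊗ₜ w) := by
    intro u v w
    show (TensorProduct.assoc K V V V) ((rTensor V σm)
      ((TensorProduct.assoc K V V V).symm (u ⊗ₜ (v ⊗ₜ w)))) = _
    simp [hσ]
  have hA2 : ∀ (u v w : V), A2 (u ⊗ₜ (v ⊗ₜ w)) = u ⊗ₜ (one ⊗ₜ m (v ⊗ₜ w)) := by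
    intro u v w
    show lTensor V σm (u ⊗ₜ (v ⊗ₜ w)) = _
    simp [hσ]
  -- retraction: r (one ⊗ x) = x
  set r : V ⊗[K] V →ₗ[K] V := m ∘ₗ (TensorProduct.comm K V V).toLinearMap with hr
  have hrx : ∀ x : V, r (one ⊗ₜ x) = x := by
    intro x; simp [hr, hone]
  set R : V ⊗[K] (V ⊗[K] V) →ₗ[K] V := r ∘ₗ lTensor V r with hR
  have hRx : ∀ x : V, R (one ⊗ₜ (one ⊗ₜ x)) = x := by
    intro x; simp [hR, hrx]
  constructor
  · intro h
    have hm : ∀ u v w : V, m (m (u ⊗ₜ v) ⊗ₜ w) = m (u ⊗ₜ m (v ⊗ₜ w)) := by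
      intro u v w
      have := congrFun (congrArg DFunLike.coe h) (u ⊗ₜ (v ⊗ₜ w))
      simpa using this
    ext u v w
    simp only [TensorProduct.AlgebraTensorModule.curry_apply, curry_apply,
      coe_restrictScalars, coe_comp, Function.comp_apply, hA1, hA2, hm, hone]
  · intro h
    have key : ∀ u v w : V, m (m (u ⊗ₜ v) ⊗ₜ w) = m (u ⊗ₜ m (v ⊗ₜ w)) := by
      intro u v w
      have h0 := congrFun (congrArg DFunLike.coe h) (u ⊗ₜ (v ⊗ₜ w))
      simp only [coe_comp, Function.comp_apply, hA1, hA2, hone] at h0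
      have := congrArg R h0
      simpa [hRx] using this
    ext u v w
    simp only [TensorProduct.AlgebraTensorModule.curry_apply, curry_apply,
      coe_restrictScalars, coe_comp, Function.comp_apply,
      LinearEquiv.coe_coe, assoc_symm_tmul, rTensor_tmul, lTensor_tmul, key]
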